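/- arXiv:1412.7885 — 3 statements merged into one kernel-verified Lean document; each statement's English description precedes it below -/
import Mathlib

section
/- For integers 1 ≤ k and n ≥ 2k, if a family F of k-element subsets of {1,...,n} is intersecting (contains no two disjoint sets), then |F| ≤ C(n-1, k-1). -/
/-- Erdős–Ko–Rado: an intersecting family of k-subsets of {1,...,n} with n ≥ 2k
has at most C(n-1, k-1) members. -/
theorem ekr (n k : ℕ) (hk : 1 ≤ k) (hn : 2 * k ≤ n)
    (F : Finset (Finset ℕ))
    (hF : ∀ A ∈ F, A ⊆ Finset.range n ∧ A.card = k)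
    (hint : ∀ A ∈ F, ∀ B ∈ F, (A ∩ B).Nonempty) :
    F.card ≤ (n - 1).choose (k - 1) := by
  classical
  set 𝒜 : Finset (Finset (Fin n)) :=
    Finset.univ.filter (fun S : Finset (Fin n) => S.image Fin.val ∈ F) with h𝒜def
  have himg : 𝒜.image (fun S : Finset (Fin n) => S.image Fin.val) = F := by
    ext A
    simp only [h𝒜def, Finset.mem_image, Finset.mem_filter, Finset.mem_univ, true_and]
    constructor
    · rintro ⟨S, hS, rfl⟩; exact hS
    · intro hA
      refine ⟨A.attachFin (fun m hm => Finset.mem_range.1 ((hF A hA).1 hm)), ?_, ?_⟩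
      · convert hA using 1
        ext m
        simp [Finset.mem_image, Finset.mem_attachFin]
      · ext m
        simp [Finset.mem_image, Finset.mem_attachFin]
  have hcard : 𝒜.card = F.card := by
    rw [← himg]
    exact (Finset.card_image_of_injective _ (fun S T h => by
      ext x
      have : ↑x ∈ S.image Fin.val ↔ ↑x ∈ T.image Fin.val := by rw [h]
      simpa [Finset.mem_image, Fin.val_injective.eq_iff] using this)).symm
  rw [← hcard]
  apply Finset.erdos_ko_rado (r := k)
  · intro A hA B hB hdis
    simp only [h𝒜def, Finset.coe_filter, Set.mem_setOf_eq, Finset.mem_univ, true_and] at hA hB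
    obtain ⟨x, hx⟩ := hint _ hA _ hB
    simp only [Finset.mem_inter, Finset.mem_image] at hx
    obtain ⟨⟨a, ha, rfl⟩, ⟨b, hb, hba⟩⟩ := hx
    exact (Finset.disjoint_left.1 hdis ha (Fin.val_injective hba ▸ hb))
  · intro S hS
    simp only [h𝒜def, Finset.coe_filter, Set.mem_setOf_eq, Finset.mem_univ, true_and] at hS
    have := (hF _ hS).2
    rwa [Finset.card_image_of_injective _ Fin.val_injective] at this
  · omega
end

section
/- For n ≥ 2k ≥ 2 and each i ∈ {1,...,n}, the vector v defined on k-subsets F by v(F) = 1_{i ∈ F} − k/n is an eigenvector of the adjacency matrix of the Kneser graph K(n,k) with eigenvalue −C(n-k-1, k-1). -/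
open Matrix

private lemma count_contain (n k : ℕ) (hk : 1 ≤ k) (i : Fin n) (F : Finset (Fin n))
    (hi : i ∉ F) (hF : F.card = k) :
    ((Fᶜ.powersetCard k).filter (fun s => i ∈ s)).card = (n - k - 1).choose (k - 1) := by
  have hcard : ((Fᶜ.erase i).powersetCard (k-1)).card = (n - k - 1).choose (k - 1) := by
    rw [Finset.card_powersetCard, Finset.card_erase_of_mem (by simpa using hi),
      Finset.card_compl, hF, Fintype.card_fin]
  rw [← hcard]
  refine Finset.card_bij' (fun s _ => s.erase i) (fun t _ => insert i t) ?_ ?_ ?_ ?_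
  · intro s hs
    simp only [Finset.mem_filter, Finset.mem_powersetCard] at hs
    obtain ⟨⟨hsub, hc⟩, hin⟩ := hs
    rw [Finset.mem_powersetCard]
    constructor
    · intro x hx
      rw [Finset.mem_erase] at hx ⊢
      exact ⟨hx.1, hsub hx.2⟩
    · rw [Finset.card_erase_of_mem hin, hc]
  · intro t ht
    rw [Finset.mem_powersetCard] at ht
    obtain ⟨hsub, hc⟩ := ht
    have hit : i ∉ t := fun h => (Finset.notMem_erase i Fᶜ) (hsub h)
    simp only [Finset.mem_filter, Finset.mem_powersetCard]
    refine ⟨⟨?_, ?_⟩, Finset.mem_insert_self i t⟩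
    · intro x hx
      rcases Finset.mem_insert.mp hx with rfl | hx
      · simpa using hi
      · exact (Finset.erase_subset i Fᶜ) (hsub hx)
    · rw [Finset.card_insert_of_notMem hit, hc]; omega
  · intro s hs
    simp only [Finset.mem_filter] at hs
    exact Finset.insert_erase hs.2
  · intro t ht
    rw [Finset.mem_powersetCard] at ht
    have hit : i ∉ t := fun h => (Finset.notMem_erase i Fᶜ) (ht.1 h)
    exact Finset.erase_insert hit

/-- For each i, the vector F ↦ 1_{i ∈ F} − k/n is an eigenvector of the Kneser
adjacency matrix with eigenvalue −C(n-k-1, k-1). -/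
theorem kneser_second_eigenvector (n k : ℕ) (hk : 1 ≤ k) (hn : 2 * k ≤ n)
    (i : Fin n) :
    let A : Matrix {s : Finset (Fin n) // s.card = k}
        {s : Finset (Fin n) // s.card = k} ℝ :=
      fun G H => if G ≠ H ∧ Disjoint G.1 H.1 then 1 else 0
    let v : {s : Finset (Fin n) // s.card = k} → ℝ :=
      fun G => (if i ∈ G.1 then 1 else 0) - (k : ℝ) / n
    A *ᵥ v = (-(((n - k - 1).choose (k - 1) : ℝ))) • v := by
  intro A v
  have hn0 : 0 < n := by omega
  funext F
  have hF : F.1.card = k := F.2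
  set P := F.1ᶜ.powersetCard k with hPdef
  have hPcard : P.card = (n - k).choose k := by
    rw [hPdef, Finset.card_powersetCard, Finset.card_compl, hF, Fintype.card_fin]
  have hA : ∀ G : {s : Finset (Fin n) // s.card = k},
      A F G * v G
        = if G.1 ∈ P then ((if i ∈ G.1 then (1:ℝ) else 0) - (k:ℝ)/n) else 0 := by
    intro G
    by_cases hd : Disjoint F.1 G.1
    · have hne : F ≠ G := by
        rintro rfl
        have : F.1 = ⊥ := disjoint_self.mp hd
        rw [this] at hF
        simp at hF; omega
      have hmem : G.1 ∈ P := by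
        rw [hPdef, Finset.mem_powersetCard]
        exact ⟨le_compl_iff_disjoint_left.mpr hd, G.2⟩
      simp [A, v, hne, hd, hmem]
    · have hmem : G.1 ∉ P := by
        rw [hPdef, Finset.mem_powersetCard]
        intro h
        exact hd (le_compl_iff_disjoint_left.mp h.1)
      simp [A, v, hd, hmem]
  have hsum : (A *ᵥ v) F = ∑ s ∈ P, ((if i ∈ s then (1:ℝ) else 0) - (k:ℝ)/n) := by
    rw [mulVec, dotProduct]
    rw [Finset.sum_congr rfl (fun G _ => hA G)]
    rw [← Finset.sum_subtype (Finset.univ.filter (fun s : Finset (Fin n) => s.card = k))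
      (by simp) (fun s => if s ∈ P then ((if i ∈ s then (1:ℝ) else 0) - (k:ℝ)/n) else 0)]
    rw [Finset.sum_ite_mem]
    congr 1
    rw [Finset.inter_eq_right]
    intro s hs
    rw [hPdef, Finset.mem_powersetCard] at hs
    simp [hs.2]
  have key : ((n - k : ℕ) : ℝ) * ((n - k - 1).choose (k - 1) : ℕ) = (k : ℝ) * ((n - k).choose k : ℕ) := by
    have : (n - k) * (n - k - 1).choose (k - 1) = k * (n - k).choose k := by
      obtain ⟨k', rfl⟩ := Nat.exists_eq_add_of_le hk
      obtain ⟨m', hm⟩ : ∃ m', n - (1+k') = m' + 1 := ⟨n - (1+k') - 1, by omega⟩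
      rw [hm]
      simp only [Nat.add_sub_cancel, Nat.add_sub_cancel_left, Nat.add_comm 1 k']
      simpa [Nat.succ_eq_add_one, mul_comm] using Nat.add_one_mul_choose_eq m' k'
    exact_mod_cast congrArg (Nat.cast : ℕ → ℝ) this
  have hnk : ((n - k : ℕ) : ℝ) = (n : ℝ) - (k : ℝ) := by
    rw [Nat.cast_sub (by omega)]
  rw [hsum]
  rw [Finset.sum_sub_distrib, Finset.sum_const, hPcard, Finset.sum_boole]
  simp only [Pi.smul_apply, smul_eq_mul, v, nsmul_eq_mul]
  by_cases hiF : i ∈ F.1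
  · have hfilt : (P.filter (fun s => i ∈ s)) = ∅ := by
      rw [Finset.filter_eq_empty_iff]
      intro s hs
      rw [hPdef, Finset.mem_powersetCard] at hs
      intro h
      exact (Finset.mem_compl.mp (hs.1 h)) hiF
    rw [hfilt]
    simp only [hiF, if_true, Finset.card_empty, Nat.cast_zero, zero_sub]
    rw [hnk] at key
    have hne : (n:ℝ) ≠ 0 := Nat.cast_ne_zero.mpr hn0.ne'
    field_simp
    linear_combination key
  · rw [count_contain n k hk i F.1 hiF hF]
    simp only [hiF, if_false]
    rw [hnk] at key
    have hne : (n:ℝ) ≠ 0 := Nat.cast_ne_zero.mpr hn0.ne'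
    field_simp
    linear_combination key
end

section
/- Let n ≥ 2k ≥ 2 and let G be a spanning subgraph of the Kneser graph K(n,k) with independence number α(G) = C(n-1, k-1). Then G has at least ((n-k)/(2k)) · C(n,k) edges. -/
open Finset

/-- The Kneser graph K(n,k). -/
def kneser (n k : ℕ) : SimpleGraph {s : Finset (Fin n) // s.card = k} where
  Adj A B := A ≠ B ∧ Disjoint A.1 B.1
  symm := ⟨fun _ _ h => ⟨h.1.symm, h.2.symm⟩⟩
  loopless := ⟨fun _ h => h.1 rfl⟩

lemma star_card (n k : ℕ) (hk : 1 ≤ k) (x : Fin n) :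
    (univ.filter (fun A : {s : Finset (Fin n) // s.card = k} => x ∈ A.1)).card
      = (n - 1).choose (k - 1) := by
  have h1 : (univ.filter (fun A : {s : Finset (Fin n) // s.card = k} => x ∈ A.1)).card
      = (((univ : Finset (Fin n)).powersetCard k).filter (fun s => x ∈ s)).card := by
    apply Finset.card_nbij (fun A => A.1)
    · intro A hA
      simp only [mem_coe, mem_filter, mem_powersetCard_univ] at *
      exact ⟨A.2, hA.2⟩
    · intro A _ B _ h
      exact Subtype.ext h
    · intro s hs
      simp only [coe_filter, Set.mem_setOf_eq, mem_powersetCard_univ, mem_coe] at hs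
      exact ⟨⟨s, hs.1⟩, by simp [hs.2], rfl⟩
  have h2 : (((univ : Finset (Fin n)).powersetCard k).filter (fun s => x ∈ s)).card
      = (({x}ᶜ : Finset (Fin n)).powersetCard (k - 1)).card := by
    apply Finset.card_nbij' (fun s => s.erase x) (fun s => insert x s)
    · intro s hs
      simp only [mem_coe, mem_filter, mem_powersetCard_univ] at hs
      rw [mem_coe, mem_powersetCard]
      constructor
      · intro y hy
        simp only [mem_erase] at hy
        simp [hy.1]
      · rw [card_erase_of_mem hs.2, hs.1]
    · intro s hs
      rw [mem_coe, mem_powersetCard] at hs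
      have hx : x ∉ s := fun h => by simpa using hs.1 h
      simp only [mem_coe, mem_filter, mem_powersetCard_univ]
      rw [card_insert_of_notMem hx, hs.2]
      exact ⟨by omega, mem_insert_self _ _⟩
    · intro s hs
      simp only [mem_coe, mem_filter] at hs
      exact insert_erase hs.2
    · intro s hs
      rw [mem_coe, mem_powersetCard] at hs
      have hx : x ∉ s := fun h => by simpa using hs.1 h
      exact erase_insert hx
  rw [h1, h2, card_powersetCard, card_compl, card_singleton, Fintype.card_fin]

set_option maxHeartbeats 1000000 in
/-- A spanning subgraph of K(n,k) with independence number C(n-1,k-1) has at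
least ((n-k)/(2k))·C(n,k) edges. -/
theorem sparse_subgraph_lower_bound (n k : ℕ) (hk : 1 ≤ k) (hn : 2 * k ≤ n)
    (G : SimpleGraph {s : Finset (Fin n) // s.card = k})
    [DecidableRel G.Adj] (hle : G ≤ kneser n k)
    (hub : ∀ S : Finset {s : Finset (Fin n) // s.card = k},
      (∀ A ∈ S, ∀ B ∈ S, ¬ G.Adj A B) → S.card ≤ (n - 1).choose (k - 1))
    (hex : ∃ S : Finset {s : Finset (Fin n) // s.card = k},
      (∀ A ∈ S, ∀ B ∈ S, ¬ G.Adj A B) ∧ S.card = (n - 1).choose (k - 1)) :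
    ((G.edgeFinset.card : ℝ)) ≥ (((n : ℝ) - k) / (2 * k)) * (n.choose k : ℝ) := by
  classical
  have hkn : k ≤ n := le_trans (by omega) hn
  -- degree lower bound
  have hdeg : ∀ F : {s : Finset (Fin n) // s.card = k}, n - k ≤ k * G.degree F := by
    intro F
    have hcover : ∀ x ∈ (F.1ᶜ : Finset (Fin n)),
        ∃ A ∈ G.neighborFinset F, x ∈ A.1 := by
      intro x hx
      by_contra hcon
      push_neg at hcon
      have hxF : x ∉ F.1 := by simpa using hx
      set S := insert F (univ.filter (fun A : {s : Finset (Fin n) // s.card = k} => x ∈ A.1))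
        with hS
      have hindep : ∀ A ∈ S, ∀ B ∈ S, ¬ G.Adj A B := by
        intro A hA B hB hadj
        rw [hS, mem_insert] at hA hB
        rcases hA with rfl | hA
        · rcases hB with rfl | hB
          · exact G.loopless.irrefl _ hadj
          · simp only [mem_filter] at hB
            exact hcon B ((G.mem_neighborFinset A B).mpr hadj) hB.2
        · rcases hB with rfl | hB
          · simp only [mem_filter] at hA
            exact hcon A ((G.mem_neighborFinset B A).mpr hadj.symm) hA.2
          · simp only [mem_filter] at hA hB
            have hkadj := hle hadj
            exact Finset.disjoint_left.mp (hkadj : A ≠ B ∧ Disjoint A.1 B.1).2 hA.2 hB.2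
      have hFnot : F ∉ univ.filter (fun A : {s : Finset (Fin n) // s.card = k} => x ∈ A.1) := by
        simp [hxF]
      have hcard : S.card = (n - 1).choose (k - 1) + 1 := by
        rw [hS, card_insert_of_notMem hFnot, star_card n k hk x]
      have := hub S hindep
      omega
    have hsub : (F.1ᶜ : Finset (Fin n)) ⊆ (G.neighborFinset F).biUnion (fun A => A.1) := by
      intro x hx
      obtain ⟨A, hA, hxA⟩ := hcover x hx
      exact mem_biUnion.mpr ⟨A, hA, hxA⟩
    have h1 : (F.1ᶜ : Finset (Fin n)).card ≤ ((G.neighborFinset F).biUnion (fun A => A.1)).card :=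
      card_le_card hsub
    have h2 : ((G.neighborFinset F).biUnion (fun A => A.1)).card
        ≤ ∑ A ∈ G.neighborFinset F, A.1.card := card_biUnion_le
    have h3 : ∑ A ∈ G.neighborFinset F, A.1.card = k * G.degree F := by
      rw [SimpleGraph.degree, Finset.sum_congr rfl (fun A _ => A.2), Finset.sum_const,
        smul_eq_mul, Nat.mul_comm]
    have h4 : (F.1ᶜ : Finset (Fin n)).card = n - k := by
      rw [card_compl, Fintype.card_fin]
      congr 1
      exact F.2
    omega
  -- sum degrees
  have hsum : (n.choose k) * (n - k) ≤ k * (2 * G.edgeFinset.card) := by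
    have := SimpleGraph.sum_degrees_eq_twice_card_edges G
    calc (n.choose k) * (n - k)
        = ∑ _F : {s : Finset (Fin n) // s.card = k}, (n - k) := by
          rw [Finset.sum_const, card_univ, Fintype.card_finset_len, Fintype.card_fin, smul_eq_mul]
      _ ≤ ∑ F : {s : Finset (Fin n) // s.card = k}, k * G.degree F :=
          Finset.sum_le_sum (fun F _ => hdeg F)
      _ = k * ∑ F, G.degree F := by rw [Finset.mul_sum]
      _ = k * (2 * G.edgeFinset.card) := by rw [this]
  -- conclude over ℝ
  rw [ge_iff_le, div_mul_eq_mul_div, div_le_iff₀ (by positivity)]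
  have hcast : ((n : ℝ) - k) = ((n - k : ℕ) : ℝ) := by
    rw [Nat.cast_sub hkn]
  rw [hcast]
  have := (Nat.cast_le (α := ℝ)).mpr hsum
  push_cast at this ⊢
  nlinarith [this]
end
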